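/- If f(θ) < 0 for all θ ∈ [0, π], then P has exactly two distinct real roots: exactly one in (u, ∞) and exactly one in (−∞, −u), and none in [−u, u]. In particular, this conclusion holds whenever b < −(|a| + 1). -/

import Mathlib

open Real

set_option maxHeartbeats 2000000

theorem stmt_14 (m p q : ℝ) (hm : m < 0)
    (u a b : ℝ) (P f : ℝ → ℝ)
    (hu : u = Real.sqrt (-m))
    (ha : a = 8 * p / (-m) ^ ((3 : ℝ) / 2))
    (hb : b = 8 * q / m ^ 2 - 1)
    (hP : ∀ t, P t = t ^ 4 + m * t ^ 2 + p * t + q)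
    (hf : ∀ θ, f θ = a * Real.cos θ + Real.cos (4 * θ) + b) :
    ((∀ θ ∈ Set.Icc 0 π, f θ < 0) →
      {t : ℝ | P t = 0}.encard = 2 ∧
      (∃! t : ℝ, t ∈ Set.Ioi u ∧ P t = 0) ∧
      (∃! t : ℝ, t ∈ Set.Iio (-u) ∧ P t = 0) ∧
      (∀ t ∈ Set.Icc (-u) u, P t ≠ 0)) ∧
    (b < -(|a| + 1) →
      {t : ℝ | P t = 0}.encard = 2 ∧
      (∃! t : ℝ, t ∈ Set.Ioi u ∧ P t = 0) ∧
      (∃! t : ℝ, t ∈ Set.Iio (-u) ∧ P t = 0) ∧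
      (∀ t ∈ Set.Icc (-u) u, P t ≠ 0)) := by
  have hm' : (0:ℝ) < -m := by linarith
  have hu0 : 0 < u := by rw [hu]; exact Real.sqrt_pos.mpr hm'
  have hu2 : u ^ 2 = -m := by rw [hu]; exact Real.sq_sqrt hm'.le
  have hmu : m = -u ^ 2 := by linarith
  have hu3 : u ^ 3 = (-m) ^ ((3 : ℝ) / 2) := by
    rw [hu, Real.sqrt_eq_rpow, ← Real.rpow_natCast ((-m) ^ ((1:ℝ)/2)) 3,
      ← Real.rpow_mul hm'.le]
    norm_num
  have hu3pos : 0 < u ^ 3 := by positivity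
  have hpu : p = a * u ^ 3 / 8 := by
    rw [ha, ← hu3]; field_simp
  have hqu : q = (b + 1) * u ^ 4 / 8 := by
    have hm2 : m ^ 2 = u ^ 4 := by nlinarith [hu2]
    rw [hb, hm2]
    have : u ^ 4 ≠ 0 := by positivity
    field_simp
    ring
  have key : ∀ θ : ℝ, P (u * Real.cos θ) = m ^ 2 / 8 * f θ := by
    intro θ
    have hc4 : Real.cos (4 * θ) = 2 * Real.cos (2 * θ) ^ 2 - 1 := by
      rw [show (4:ℝ) * θ = 2 * (2 * θ) by ring]; exact Real.cos_two_mul _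
    have hc2 : Real.cos (2 * θ) = 2 * Real.cos θ ^ 2 - 1 := Real.cos_two_mul θ
    rw [hP, hf, hc4, hc2, hmu, hpu, hqu]
    ring
  -- main part: from negativity of f on [0, π]
  have main : (∀ θ ∈ Set.Icc 0 π, f θ < 0) →
      {t : ℝ | P t = 0}.encard = 2 ∧
      (∃! t : ℝ, t ∈ Set.Ioi u ∧ P t = 0) ∧
      (∃! t : ℝ, t ∈ Set.Iio (-u) ∧ P t = 0) ∧
      (∀ t ∈ Set.Icc (-u) u, P t ≠ 0) := by
    intro hA
    have Hneg : ∀ t ∈ Set.Icc (-u) u, P t < 0 := by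
      intro t ht
      obtain ⟨ht1, ht2⟩ := ht
      have hc1 : -1 ≤ t / u := by
        rw [le_div_iff₀ hu0]; linarith
      have hc2 : t / u ≤ 1 := by
        rw [div_le_one hu0]; linarith
      have hθ : Real.arccos (t / u) ∈ Set.Icc 0 π :=
        ⟨Real.arccos_nonneg _, Real.arccos_le_pi _⟩
      have hcos : Real.cos (Real.arccos (t / u)) = t / u := Real.cos_arccos hc1 hc2
      have hut : u * Real.cos (Real.arccos (t / u)) = t := by
        rw [hcos]; field_simp
      have := key (Real.arccos (t / u))
      rw [hut] at this
      rw [this]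
      have hfneg := hA _ hθ
      have hm2 : 0 < m ^ 2 := by nlinarith
      nlinarith
    have contP : Continuous P := by
      have hPe : P = fun t => t ^ 4 + m * t ^ 2 + p * t + q := funext hP
      rw [hPe]; fun_prop
    have hPu : P u < 0 := Hneg u ⟨by linarith, le_refl u⟩
    have hPnu : P (-u) < 0 := Hneg (-u) ⟨le_refl _, by linarith⟩
    set T : ℝ := 1 + u + |m| + |p| + |q| with hT
    have hTu : u < T := by
      have := abs_nonneg m; have := abs_nonneg p; have := abs_nonneg q
      simp only [hT]; linarith
    have hT1 : 1 ≤ T := by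
      have := abs_nonneg m; have := abs_nonneg p; have := abs_nonneg q
      simp only [hT]; linarith
    have habm := abs_nonneg m
    have habp := abs_nonneg p
    have habq := abs_nonneg q
    have hT0 : (0:ℝ) < T := by linarith
    have hTge : 1 + |m| + |p| + |q| ≤ T := by simp only [hT]; linarith
    have hTT : T ≤ T ^ 2 := by nlinarith
    have hTT2 : T ^ 2 ≤ T ^ 3 := by nlinarith
    have hTT3 : T ^ 3 ≤ T ^ 4 := by nlinarith
    have hbig : T ^ 3 + |m| * T ^ 2 + |p| * T + |q| ≤ T ^ 4 := by
      have h1 : (1 + |m| + |p| + |q|) * T ^ 3 ≤ T * T ^ 3 :=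
        mul_le_mul_of_nonneg_right hTge (by positivity)
      have h2 : |m| * T ^ 2 ≤ |m| * T ^ 3 := mul_le_mul_of_nonneg_left hTT2 habm
      have h3 : |p| * T ≤ |p| * T ^ 3 := mul_le_mul_of_nonneg_left (hTT.trans hTT2) habp
      have h4 : |q| * 1 ≤ |q| * T ^ 3 := by
        apply mul_le_mul_of_nonneg_left _ habq
        nlinarith
      nlinarith
    have hPT : 0 < P T := by
      rw [hP]
      have h1 : -(|m| * T ^ 2) ≤ m * T ^ 2 := by nlinarith [neg_abs_le m, sq_nonneg T]
      have h2 : -(|p| * T) ≤ p * T := by nlinarith [neg_abs_le p]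
      have h3 : -|q| ≤ q := neg_abs_le q
      have hT3 : 0 < T ^ 3 := by positivity
      linarith
    have hPnT : 0 < P (-T) := by
      rw [hP]
      have h1 : -(|m| * T ^ 2) ≤ m * (-T) ^ 2 := by nlinarith [neg_abs_le m, sq_nonneg T]
      have h2 : -(|p| * T) ≤ p * (-T) := by nlinarith [le_abs_self p]
      have h3 : -|q| ≤ q := neg_abs_le q
      have hT3 : 0 < T ^ 3 := by positivity
      have : (-T) ^ 4 = T ^ 4 := by ring
      rw [this]
      linarith
    -- existence of roots
    obtain ⟨rpos, hrpos_mem, hrpos0⟩ :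
        ∃ r ∈ Set.Ioo u T, P r = 0 := by
      have h := intermediate_value_Ioo hTu.le contP.continuousOn
      have h0 : (0:ℝ) ∈ Set.Ioo (P u) (P T) := ⟨hPu, hPT⟩
      obtain ⟨r, hr, hr0⟩ := h h0
      exact ⟨r, hr, hr0⟩
    obtain ⟨rneg, hrneg_mem, hrneg0⟩ :
        ∃ r ∈ Set.Ioo (-T) (-u), P r = 0 := by
      have h := intermediate_value_Ioo' (by linarith : -T ≤ -u) contP.continuousOn
      have h0 : (0:ℝ) ∈ Set.Ioo (P (-u)) (P (-T)) := ⟨hPnu, hPnT⟩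
      obtain ⟨r, hr, hr0⟩ := h h0
      exact ⟨r, hr, hr0⟩
    -- uniqueness via strict convexity identity
    have convR : ∀ y z : ℝ, u < y → y < z → P y = 0 → P z = 0 → False := by
      intro y z hy hyz hPy hPz
      rw [hP] at hPy hPz
      have hPu' : u ^ 4 + m * u ^ 2 + p * u + q < 0 := by rw [hP] at hPu; exact hPu
      have id1 : (z - y) * (u ^ 4 + m * u ^ 2 + p * u + q) =
          (y - u) * (z - y) * (z - u) *
            (u ^ 2 + y ^ 2 + z ^ 2 + u * y + u * z + y * z + m) -
          (y - u) * (z ^ 4 + m * z ^ 2 + p * z + q) +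
          (z - u) * (y ^ 4 + m * y ^ 2 + p * y + q) := by ring
      have hS : 0 < u ^ 2 + y ^ 2 + z ^ 2 + u * y + u * z + y * z + m := by
        nlinarith [mul_pos hu0 (hu0.trans hy), mul_pos hu0 (hu0.trans (hy.trans hyz)),
          mul_pos (hu0.trans hy) (hu0.trans (hy.trans hyz))]
      have hfac : 0 < (y - u) * (z - y) * (z - u) := by
        apply mul_pos (mul_pos (by linarith) (by linarith)) (by linarith)
      have e1 : (y - u) * (z ^ 4 + m * z ^ 2 + p * z + q) = 0 := by rw [hPz]; ring
      have e2 : (z - u) * (y ^ 4 + m * y ^ 2 + p * y + q) = 0 := by rw [hPy]; ring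
      have e3 : (z - y) * (u ^ 4 + m * u ^ 2 + p * u + q) < 0 :=
        mul_neg_of_pos_of_neg (by linarith) hPu'
      linarith [id1, e1, e2, e3, mul_pos hfac hS]
    have convL : ∀ x y : ℝ, x < y → y < -u → P x = 0 → P y = 0 → False := by
      intro x y hxy hy hPx hPy
      rw [hP] at hPx hPy
      have hPnu' : (-u) ^ 4 + m * (-u) ^ 2 + p * (-u) + q < 0 := by
        rw [hP] at hPnu; exact hPnu
      have hx0 : x < -u := hxy.trans hy
      have id1 : (y - x) * ((-u) ^ 4 + m * (-u) ^ 2 + p * (-u) + q) =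
          (y - x) * (-u - y) * (-u - x) *
            (x ^ 2 + y ^ 2 + u ^ 2 + x * y - u * x - u * y + m) -
          (-u - y) * (x ^ 4 + m * x ^ 2 + p * x + q) +
          (-u - x) * (y ^ 4 + m * y ^ 2 + p * y + q) := by ring
      have hS : 0 < x ^ 2 + y ^ 2 + u ^ 2 + x * y - u * x - u * y + m := by
        nlinarith [mul_pos (by linarith : (0:ℝ) < -x) (by linarith : (0:ℝ) < -y),
          mul_pos hu0 (by linarith : (0:ℝ) < -x),
          mul_pos hu0 (by linarith : (0:ℝ) < -y)]
      have hfac : 0 < (y - x) * (-u - y) * (-u - x) := by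
        apply mul_pos (mul_pos (by linarith) (by linarith)) (by linarith)
      have e1 : (-u - y) * (x ^ 4 + m * x ^ 2 + p * x + q) = 0 := by rw [hPx]; ring
      have e2 : (-u - x) * (y ^ 4 + m * y ^ 2 + p * y + q) = 0 := by rw [hPy]; ring
      have e3 : (y - x) * ((-u) ^ 4 + m * (-u) ^ 2 + p * (-u) + q) < 0 :=
        mul_neg_of_pos_of_neg (by linarith) hPnu'
      linarith [id1, e1, e2, e3, mul_pos hfac hS]
    have uniqR : ∀ t : ℝ, t ∈ Set.Ioi u ∧ P t = 0 → t = rpos := by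
      rintro t ⟨ht, hPt⟩
      rcases lt_trichotomy t rpos with h | h | h
      · exact absurd (convR t rpos ht h hPt hrpos0) not_false
      · exact h
      · exact absurd (convR rpos t hrpos_mem.1 h hrpos0 hPt) not_false
    have uniqL : ∀ t : ℝ, t ∈ Set.Iio (-u) ∧ P t = 0 → t = rneg := by
      rintro t ⟨ht, hPt⟩
      rcases lt_trichotomy t rneg with h | h | h
      · exact absurd (convL t rneg h hrneg_mem.2 hPt hrneg0) not_false
      · exact h
      · exact absurd (convL rneg t h ht hrneg0 hPt) not_false
    have noMid : ∀ t ∈ Set.Icc (-u) u, P t ≠ 0 := fun t ht => (Hneg t ht).ne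
    have hset : {t : ℝ | P t = 0} = {rneg, rpos} := by
      ext t
      simp only [Set.mem_setOf_eq, Set.mem_insert_iff, Set.mem_singleton_iff]
      constructor
      · intro hPt
        by_cases hmem : t ∈ Set.Icc (-u) u
        · exact absurd hPt (noMid t hmem)
        · simp only [Set.mem_Icc, not_and_or, not_le] at hmem
          rcases hmem with h | h
          · exact Or.inl (uniqL t ⟨h, hPt⟩)
          · exact Or.inr (uniqR t ⟨h, hPt⟩)
      · rintro (rfl | rfl)
        · exact hrneg0
        · exact hrpos0
    have hne : rneg ≠ rpos := by
      intro h
      have h1 := hrneg_mem.2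
      have h2 := hrpos_mem.1
      rw [h] at h1
      linarith
    refine ⟨?_, ?_, ?_, noMid⟩
    · rw [hset]; exact Set.encard_pair hne
    · exact ⟨rpos, ⟨hrpos_mem.1, hrpos0⟩, uniqR⟩
    · exact ⟨rneg, ⟨hrneg_mem.2, hrneg0⟩, uniqL⟩
  refine ⟨main, fun hab => main ?_⟩
  intro θ _
  rw [hf]
  have h1 : a * Real.cos θ ≤ |a| := by
    calc a * Real.cos θ ≤ |a * Real.cos θ| := le_abs_self _
      _ = |a| * |Real.cos θ| := abs_mul _ _
      _ ≤ |a| * 1 := mul_le_mul_of_nonneg_left (Real.abs_cos_le_one θ) (abs_nonneg a)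
      _ = |a| := mul_one _
  have h2 : Real.cos (4 * θ) ≤ 1 := Real.cos_le_one _
  linarith
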